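/- Let ℓ : [0,1] → ℝ be differentiable with exp(ℓ) concave, ℓ(1/2) = 0, and ℓ' Lipschitz with constant β (β-smooth). Then |ℓ'(x)| ≤ √β for all x ∈ [0,1], and consequently |ℓ(x)| ≤ √β·|x - 1/2| ≤ √β/2 for all x ∈ [0,1]. -/

import Mathlib

open Set

/-- Second-order Taylor lower bound at the left endpoint. -/
lemma taylor_lower_right
    (β : ℝ) (ℓ ℓ' : ℝ → ℝ)
    (hd : ∀ x ∈ Icc (0:ℝ) 1, HasDerivWithinAt ℓ (ℓ' x) (Icc (0:ℝ) 1) x)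
    (hlip : ∀ x ∈ Icc (0:ℝ) 1, ∀ y ∈ Icc (0:ℝ) 1, |ℓ' x - ℓ' y| ≤ β * |x - y|)
    {x y : ℝ} (hx : x ∈ Icc (0:ℝ) 1) (hy : y ∈ Icc (0:ℝ) 1) (hxy : x ≤ y) :
    ℓ x + ℓ' x * (y - x) - β / 2 * (y - x) ^ 2 ≤ ℓ y := by
  have hsub : Icc x y ⊆ Icc (0:ℝ) 1 := Icc_subset_Icc hx.1 hy.2
  have hsub' : Ioo x y ⊆ Icc (0:ℝ) 1 := Ioo_subset_Icc_self.trans hsub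
  set φ : ℝ → ℝ := fun z => ℓ z - ℓ' x * z + β / 2 * (z - x) ^ 2 with hφ
  have hmono : MonotoneOn φ (Icc x y) := by
    apply monotoneOn_of_hasDerivWithinAt_nonneg (convex_Icc x y)
      (f' := fun z => ℓ' z - ℓ' x + β * (z - x))
    · intro z hz
      have := ((hd z (hsub hz)).continuousWithinAt).mono hsub
      exact ((this.sub (continuousWithinAt_const.mul continuousWithinAt_id)).add
        ((continuousWithinAt_const.mul
          ((continuousWithinAt_id.sub continuousWithinAt_const).pow 2))))
    · intro z hz
      rw [interior_Icc] at hz ⊢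
      have h1 : HasDerivWithinAt ℓ (ℓ' z) (Ioo x y) z := (hd z (hsub' hz)).mono hsub'
      have h2 : HasDerivWithinAt (fun w : ℝ => ℓ' x * w) (ℓ' x) (Ioo x y) z := by
        simpa using (hasDerivWithinAt_id z (Ioo x y)).const_mul (ℓ' x)
      have h3 : HasDerivWithinAt (fun w : ℝ => β / 2 * (w - x) ^ 2) (β * (z - x)) (Ioo x y) z := by
        have : HasDerivWithinAt (fun w : ℝ => (w - x) ^ 2) (2 * (z - x) ^ 1 * 1) (Ioo x y) z :=
          ((hasDerivWithinAt_id z (Ioo x y)).sub_const x).pow 2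
        have := this.const_mul (β / 2)
        rw [show β * (z - x) = β / 2 * (2 * (z - x) ^ 1 * 1) by ring]
        exact this
      exact (h1.sub h2).add h3
    · intro z hz
      rw [interior_Icc] at hz
      have hz' : z ∈ Icc (0:ℝ) 1 := hsub' hz
      have hl := hlip x hx z hz'
      have e : |x - z| = z - x := by
        rw [abs_sub_comm]; exact abs_of_nonneg (by linarith [hz.1])
      rw [e] at hl
      have := (abs_le.1 hl).2
      linarith
  have := hmono (left_mem_Icc.2 hxy) (right_mem_Icc.2 hxy) hxy
  simp only [hφ] at this
  nlinarith [this]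

/-- Second-order Taylor lower bound at the right endpoint. -/
lemma taylor_lower_left
    (β : ℝ) (ℓ ℓ' : ℝ → ℝ)
    (hd : ∀ x ∈ Icc (0:ℝ) 1, HasDerivWithinAt ℓ (ℓ' x) (Icc (0:ℝ) 1) x)
    (hlip : ∀ x ∈ Icc (0:ℝ) 1, ∀ y ∈ Icc (0:ℝ) 1, |ℓ' x - ℓ' y| ≤ β * |x - y|)
    {x y : ℝ} (hx : x ∈ Icc (0:ℝ) 1) (hy : y ∈ Icc (0:ℝ) 1) (hxy : x ≤ y) :
    ℓ y + ℓ' y * (x - y) - β / 2 * (x - y) ^ 2 ≤ ℓ x := by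
  have hsub : Icc x y ⊆ Icc (0:ℝ) 1 := Icc_subset_Icc hx.1 hy.2
  have hsub' : Ioo x y ⊆ Icc (0:ℝ) 1 := Ioo_subset_Icc_self.trans hsub
  set φ : ℝ → ℝ := fun z => ℓ z - ℓ' y * z + β / 2 * (z - y) ^ 2 with hφ
  have hanti : AntitoneOn φ (Icc x y) := by
    apply antitoneOn_of_hasDerivWithinAt_nonpos (convex_Icc x y)
      (f' := fun z => ℓ' z - ℓ' y + β * (z - y))
    · intro z hz
      have := ((hd z (hsub hz)).continuousWithinAt).mono hsub
      exact ((this.sub (continuousWithinAt_const.mul continuousWithinAt_id)).add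
        ((continuousWithinAt_const.mul
          ((continuousWithinAt_id.sub continuousWithinAt_const).pow 2))))
    · intro z hz
      rw [interior_Icc] at hz ⊢
      have h1 : HasDerivWithinAt ℓ (ℓ' z) (Ioo x y) z := (hd z (hsub' hz)).mono hsub'
      have h2 : HasDerivWithinAt (fun w : ℝ => ℓ' y * w) (ℓ' y) (Ioo x y) z := by
        simpa using (hasDerivWithinAt_id z (Ioo x y)).const_mul (ℓ' y)
      have h3 : HasDerivWithinAt (fun w : ℝ => β / 2 * (w - y) ^ 2) (β * (z - y)) (Ioo x y) z := by
        have : HasDerivWithinAt (fun w : ℝ => (w - y) ^ 2) (2 * (z - y) ^ 1 * 1) (Ioo x y) z :=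
          ((hasDerivWithinAt_id z (Ioo x y)).sub_const y).pow 2
        have := this.const_mul (β / 2)
        rw [show β * (z - y) = β / 2 * (2 * (z - y) ^ 1 * 1) by ring]
        exact this
      exact (h1.sub h2).add h3
    · intro z hz
      rw [interior_Icc] at hz
      have hz' : z ∈ Icc (0:ℝ) 1 := hsub' hz
      have hl := hlip z hz' y hy
      have e : |z - y| = y - z := by
        rw [abs_sub_comm]; exact abs_of_nonneg (by linarith [hz.2])
      rw [e] at hl
      have := (abs_le.1 hl).2
      linarith
  have := hanti (left_mem_Icc.2 hxy) (right_mem_Icc.2 hxy) hxy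
  simp only [hφ] at this
  nlinarith [this]

set_option maxHeartbeats 1000000 in
theorem beta_smooth_exp_concave_bounds
    (β : ℝ) (hβ : 0 < β)
    (ℓ ℓ' : ℝ → ℝ)
    (hd : ∀ x ∈ Icc (0:ℝ) 1, HasDerivWithinAt ℓ (ℓ' x) (Icc (0:ℝ) 1) x)
    (hℓ'cont : ContinuousOn ℓ' (Icc (0:ℝ) 1))
    (hconc : ConcaveOn ℝ (Icc (0:ℝ) 1) (fun x => Real.exp (ℓ x)))
    (hnorm : ℓ (1/2) = 0)
    (hlip : ∀ x ∈ Icc (0:ℝ) 1, ∀ y ∈ Icc (0:ℝ) 1, |ℓ' x - ℓ' y| ≤ β * |x - y|) :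
    ∀ x ∈ Icc (0:ℝ) 1,
      |ℓ' x| ≤ Real.sqrt β ∧
      |ℓ x| ≤ Real.sqrt β * |x - 1/2| ∧
      Real.sqrt β * |x - 1/2| ≤ Real.sqrt β / 2 := by
  set s := Real.sqrt β with hs
  have hs0 : 0 < s := Real.sqrt_pos.2 hβ
  have hs2 : s ^ 2 = β := Real.sq_sqrt hβ.le
  -- upper bound for interior-from-right points
  have hub' : ∀ x ∈ Icc (0:ℝ) 1, x < 1 → ℓ' x ≤ s := by
    intro x hx hx1
    by_contra hcon
    push_neg at hcon
    set c := ℓ' x with hc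
    have hcs : s < c := hcon
    have hc0 : 0 < c := hs0.trans hcs
    set t := min (1 - x) ((c - s) / β) with ht
    have ht0 : 0 < t := lt_min (by linarith) (div_pos (by linarith) hβ)
    have ht1 : t ≤ 1 - x := min_le_left _ _
    have ht2 : t ≤ (c - s) / β := min_le_right _ _
    have ht2' : β * t ≤ c - s := by
      have := (le_div_iff₀ hβ).1 ht2
      linarith
    have hy : x + t ∈ Icc (0:ℝ) 1 := ⟨by linarith [hx.1], by linarith⟩
    have hxy : x < x + t := by linarith
    -- Taylor lower bound
    have h1 : ℓ x + c * t - β / 2 * t ^ 2 ≤ ℓ (x + t) := by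
      have := taylor_lower_right β ℓ ℓ' hd hlip hx hy (by linarith)
      simpa using this
    -- tangent upper bound from concavity
    have hderiv : HasDerivWithinAt (fun z => Real.exp (ℓ z)) (Real.exp (ℓ x) * c)
        (Icc (0:ℝ) 1) x := (hd x hx).exp
    have h2 : slope (fun z => Real.exp (ℓ z)) x (x + t) ≤ Real.exp (ℓ x) * c :=
      hconc.slope_le_of_hasDerivWithinAt hx hy hxy hderiv
    rw [slope_def_field] at h2
    have h2' : Real.exp (ℓ (x + t)) - Real.exp (ℓ x) ≤ Real.exp (ℓ x) * c * t := by
      have e : x + t - x = t := by ring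
      rw [e] at h2
      have := (div_le_iff₀ ht0).1 h2
      linarith
    -- exponential lower bound
    obtain ⟨u, hu⟩ : ∃ u, u = c * t - β / 2 * t ^ 2 := ⟨_, rfl⟩
    have hu0 : 0 ≤ u := by
      nlinarith [mul_le_mul_of_nonneg_right ht2' ht0.le, mul_nonneg hs0.le ht0.le]
    have h3 : Real.exp (ℓ x) * (1 + u + u ^ 2 / 2) ≤ Real.exp (ℓ (x + t)) := by
      have e1 : 1 + u + u ^ 2 / 2 ≤ Real.exp u := Real.quadratic_le_exp_of_nonneg hu0
      have e2 : Real.exp (ℓ x) * Real.exp u = Real.exp (ℓ x + u) := (Real.exp_add _ _).symm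
      calc Real.exp (ℓ x) * (1 + u + u ^ 2 / 2) ≤ Real.exp (ℓ x) * Real.exp u :=
            mul_le_mul_of_nonneg_left e1 (Real.exp_pos _).le
        _ = Real.exp (ℓ x + u) := e2
        _ ≤ Real.exp (ℓ (x + t)) := Real.exp_le_exp.2 (by linarith)
    -- combine: u + u^2/2 ≤ c t, so u^2 ≤ β t^2
    have hexp : 0 < Real.exp (ℓ x) := Real.exp_pos _
    have h4 : u + u ^ 2 / 2 ≤ c * t := by
      have := h3.trans (by linarith [h2'] : Real.exp (ℓ (x + t)) ≤
        Real.exp (ℓ x) + Real.exp (ℓ x) * c * t)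
      nlinarith [this, hexp]
    have h5 : u ^ 2 ≤ β * t ^ 2 := by nlinarith [hu]
    -- but u = t * (c - β t / 2) with c - β t / 2 > s, so u^2 > s^2 t^2 = β t^2
    have h6 : s * t < u := by nlinarith [hu]
    have : β * t ^ 2 < u ^ 2 := by
      have h7 : 0 ≤ s * t := mul_nonneg hs0.le ht0.le
      have h8 := mul_self_lt_mul_self h7 h6
      nlinarith [h8, hs2]
    linarith
  -- lower bound for interior-from-left points
  have hlb' : ∀ x ∈ Icc (0:ℝ) 1, 0 < x → -s ≤ ℓ' x := by
    intro y hy hy0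
    by_contra hcon
    push_neg at hcon
    set c := ℓ' y with hc
    have hcs : c < -s := hcon
    have hc0 : c < 0 := by linarith
    set t := min y ((-c - s) / β) with ht
    have ht0 : 0 < t := lt_min hy0 (div_pos (by linarith) hβ)
    have ht1 : t ≤ y := min_le_left _ _
    have ht2 : t ≤ (-c - s) / β := min_le_right _ _
    have ht2' : β * t ≤ -c - s := by
      have := (le_div_iff₀ hβ).1 ht2
      linarith
    have hx : y - t ∈ Icc (0:ℝ) 1 := ⟨by linarith, by linarith [hy.2]⟩
    have hxy : y - t < y := by linarith
    -- Taylor lower bound at the right endpoint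
    have h1 : ℓ y + (-c) * t - β / 2 * t ^ 2 ≤ ℓ (y - t) := by
      have := taylor_lower_left β ℓ ℓ' hd hlip hx hy (by linarith)
      have e : (y - t - y) = -t := by ring
      rw [e] at this
      nlinarith [this]
    -- tangent bound from concavity at right endpoint
    have hderiv : HasDerivWithinAt (fun z => Real.exp (ℓ z)) (Real.exp (ℓ y) * c)
        (Icc (0:ℝ) 1) y := (hd y hy).exp
    have h2 : Real.exp (ℓ y) * c ≤ slope (fun z => Real.exp (ℓ z)) (y - t) y :=
      hconc.le_slope_of_hasDerivWithinAt hx hy hxy hderiv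
    rw [slope_def_field] at h2
    have h2' : Real.exp (ℓ (y - t)) ≤ Real.exp (ℓ y) + Real.exp (ℓ y) * (-c) * t := by
      have e : y - (y - t) = t := by ring
      rw [e] at h2
      have := (le_div_iff₀ ht0).1 h2
      nlinarith
    -- exponential lower bound
    obtain ⟨u, hu⟩ : ∃ u, u = (-c) * t - β / 2 * t ^ 2 := ⟨_, rfl⟩
    have hu0 : 0 ≤ u := by
      nlinarith [mul_le_mul_of_nonneg_right ht2' ht0.le, mul_nonneg hs0.le ht0.le]
    have h3 : Real.exp (ℓ y) * (1 + u + u ^ 2 / 2) ≤ Real.exp (ℓ (y - t)) := by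
      have e1 : 1 + u + u ^ 2 / 2 ≤ Real.exp u := Real.quadratic_le_exp_of_nonneg hu0
      have e2 : Real.exp (ℓ y) * Real.exp u = Real.exp (ℓ y + u) := (Real.exp_add _ _).symm
      calc Real.exp (ℓ y) * (1 + u + u ^ 2 / 2) ≤ Real.exp (ℓ y) * Real.exp u :=
            mul_le_mul_of_nonneg_left e1 (Real.exp_pos _).le
        _ = Real.exp (ℓ y + u) := e2
        _ ≤ Real.exp (ℓ (y - t)) := Real.exp_le_exp.2 (by linarith)
    have hexp : 0 < Real.exp (ℓ y) := Real.exp_pos _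
    have h4 : u + u ^ 2 / 2 ≤ (-c) * t := by nlinarith [h3, h2']
    have h5 : u ^ 2 ≤ β * t ^ 2 := by nlinarith [hu]
    have h6 : s * t < u := by nlinarith [hu]
    have : β * t ^ 2 < u ^ 2 := by
      have h7 : 0 ≤ s * t := mul_nonneg hs0.le ht0.le
      have h8 := mul_self_lt_mul_self h7 h6
      nlinarith [h8, hs2]
    linarith
  -- extend bounds to the endpoints
  have hub : ∀ x ∈ Icc (0:ℝ) 1, ℓ' x ≤ s := by
    intro x hx
    rcases lt_or_eq_of_le hx.2 with h1 | h1
    · exact hub' x hx h1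
    · subst h1
      by_contra hcon
      push_neg at hcon
      set c := ℓ' 1 with hc
      set z := max (1/2 : ℝ) (1 - (c - s) / (2 * β)) with hz
      have hz1 : z < 1 := by
        apply max_lt (by norm_num)
        have : 0 < (c - s) / (2 * β) := div_pos (by linarith) (by linarith)
        linarith
      have hzm : z ∈ Icc (0:ℝ) 1 := ⟨le_trans (by norm_num) (le_max_left _ _), hz1.le⟩
      have hz2 : 1 - z ≤ (c - s) / (2 * β) := by
        have := le_max_right (1/2 : ℝ) (1 - (c - s) / (2 * β))
        linarith
      have hlz := hlip 1 (by norm_num) z hzm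
      have e : |(1:ℝ) - z| = 1 - z := abs_of_nonneg (by linarith)
      rw [e] at hlz
      have h2 := (abs_le.1 hlz).2
      have h3 : ℓ' z ≤ s := hub' z hzm hz1
      have h4 : β * (1 - z) ≤ (c - s) / 2 := by
        have hmul : β * (1 - z) ≤ β * ((c - s) / (2 * β)) :=
          mul_le_mul_of_nonneg_left hz2 hβ.le
        have e : β * ((c - s) / (2 * β)) = (c - s) / 2 := by
          field_simp
        linarith
      linarith
  have hlb : ∀ x ∈ Icc (0:ℝ) 1, -s ≤ ℓ' x := by
    intro x hx
    rcases lt_or_eq_of_le hx.1 with h1 | h1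
    · exact hlb' x hx h1
    · subst h1
      by_contra hcon
      push_neg at hcon
      set c := ℓ' 0 with hc
      set z := min (1/2 : ℝ) ((-c - s) / (2 * β)) with hz
      have hz1 : 0 < z := lt_min (by norm_num) (div_pos (by linarith) (by linarith))
      have hzm : z ∈ Icc (0:ℝ) 1 := ⟨hz1.le, le_trans (min_le_left _ _) (by norm_num)⟩
      have hz2 : z ≤ (-c - s) / (2 * β) := min_le_right _ _
      have hlz := hlip 0 (by norm_num) z hzm
      have e : |(0:ℝ) - z| = z := by
        rw [abs_sub_comm, sub_zero]; exact abs_of_nonneg hz1.le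
      rw [e] at hlz
      have h2 := (abs_le.1 hlz).1
      have h3 : -s ≤ ℓ' z := hlb' z hzm hz1
      have h4 : β * z ≤ (-c - s) / 2 := by
        have hmul : β * z ≤ β * ((-c - s) / (2 * β)) := mul_le_mul_of_nonneg_left hz2 hβ.le
        have e : β * ((-c - s) / (2 * β)) = (-c - s) / 2 := by
          field_simp
        linarith
      linarith
  -- conclude
  intro x hx
  have habs : |ℓ' x| ≤ s := abs_le.2 ⟨hlb x hx, hub x hx⟩
  refine ⟨habs, ?_, ?_⟩
  · have hhalf : (1/2 : ℝ) ∈ Icc (0:ℝ) 1 := by norm_num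
    have := (convex_Icc (0:ℝ) 1).norm_image_sub_le_of_norm_hasDerivWithin_le
      (f := ℓ) (f' := ℓ') hd (fun z hz => by
        rw [Real.norm_eq_abs]; exact abs_le.2 ⟨hlb z hz, hub z hz⟩) hhalf hx
    rw [hnorm, sub_zero] at this
    simpa [Real.norm_eq_abs] using this
  · have h12 : |x - 1/2| ≤ 1/2 := by
      rw [abs_le]
      constructor <;> [linarith [hx.1]; linarith [hx.2]]
    calc s * |x - 1/2| ≤ s * (1/2) := mul_le_mul_of_nonneg_left h12 hs0.le
      _ = s / 2 := by ring
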